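/- For every n ≥ 4 and every k ≥ 0, dim_ℂ (K_n)_k = C(n,4) and dim_ℂ (𝔅_n')_k = Σ_{s=2}^{n−1} C(s,2)·C(n−s+k, n−s); equivalently, Hilb(K_n, t) = C(n,4)/(1−t) and Hilb(𝔅_n', t) = Σ_{s=2}^{n−1} C(s,2)/(1−t)^{n−s+1}. -/

import Mathlib

/-- Index set for the variables `x_{ij}` (`1 ≤ j < i ≤ n`, `0`-indexed). -/
abbrev PIdx (n : ℕ) := { p : Fin n × Fin n // p.2 < p.1 }

/-- The polynomial ring `S = ℂ[x_{ij} : j < i]`. -/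
abbrev Sn (n : ℕ) := MvPolynomial (PIdx n) ℂ

/-- Index set for the basis `r_{ijk}` (`k < j < i`). -/
abbrev TIdx (n : ℕ) := { t : Fin n × Fin n × Fin n // t.2.2 < t.2.1 ∧ t.2.1 < t.1 }

/-- The free `S`-module `F` with basis `{r_{ijk} : k < j < i}`. -/
abbrev Fn (n : ℕ) := TIdx n → Sn n

/-- The variable `x_{ij}` (for `j < i`). -/
noncomputable def Xv (n : ℕ) (i j : Fin n) (h : j < i) : Sn n := MvPolynomial.X ⟨(i, j), h⟩

/-- The basis element `r_{ijk}` of `F` (for `k < j < i`). -/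
noncomputable def rGen (n : ℕ) (i j k : Fin n) (h1 : k < j) (h2 : j < i) : Fn n :=
  Pi.single ⟨(i, j, k), h1, h2⟩ 1

/-- The generating set `B = ∪ B_{ijk}` of relations (`g₁,…,g₄, h₁,…,h₈` of the paper):
for each `k < j < i` and admissible `l₁ < k < l₂ < j < l₃ < i < l₄` and pairs `t < s`
with `{s,t} ∩ {i,j,k} = ∅`. -/
noncomputable def BSet (n : ℕ) : Set (Fn n) :=
  { w | ∃ (i j k : Fin n) (hkj : k < j) (hji : j < i),
    -- g₁
    (∃ (l : Fin n) (h1 : k < l) (h2 : l < j),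
      w = (-Xv n j k hkj - Xv n l k h1) • rGen n i j l h2 hji
          + Xv n j l h2 • rGen n i j k hkj hji) ∨
    -- g₂
    (∃ (l : Fin n) (_h1 : k < l) (h2 : l < j),
      w = Xv n j k hkj • rGen n i j l h2 hji
          + Xv n i l (h2.trans hji) • rGen n i j k hkj hji) ∨
    -- g₃
    (∃ (l : Fin n) (h1 : j < l) (h2 : l < i),
      w = -(Xv n j k hkj • rGen n i l j h1 h2)
          + Xv n i l h2 • rGen n i j k hkj hji) ∨
    -- g₄
    (∃ (l : Fin n) (h1 : i < l),
      w = Xv n j k hkj • rGen n l i j hji h1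
          + Xv n l i h1 • rGen n i j k hkj hji) ∨
    -- h₁
    (∃ (l : Fin n) (h1 : l < k),
      w = (Xv n i l (h1.trans (hkj.trans hji)) + Xv n j l (h1.trans hkj) + Xv n k l h1) •
          rGen n i j k hkj hji) ∨
    -- h₂
    (w = (Xv n i k (hkj.trans hji) + Xv n j k hkj) • rGen n i j k hkj hji) ∨
    -- h₃
    (∃ (l : Fin n) (h1 : k < l) (_h2 : l < j), w = Xv n l k h1 • rGen n i j k hkj hji) ∨
    -- h₄
    (∃ (l : Fin n) (h1 : j < l) (_h2 : l < i),
      w = Xv n l k (hkj.trans h1) • rGen n i j k hkj hji) ∨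
    -- h₅
    (∃ (l : Fin n) (h1 : j < l) (_h2 : l < i), w = Xv n l j h1 • rGen n i j k hkj hji) ∨
    -- h₆
    (∃ (l : Fin n) (h1 : i < l),
      w = Xv n l k ((hkj.trans hji).trans h1) • rGen n i j k hkj hji) ∨
    -- h₇
    (∃ (l : Fin n) (h1 : i < l), w = Xv n l j (hji.trans h1) • rGen n i j k hkj hji) ∨
    -- h₈
    (∃ (s t : Fin n) (h : t < s), s ≠ i ∧ s ≠ j ∧ s ≠ k ∧ t ≠ i ∧ t ≠ j ∧ t ≠ k ∧
      w = Xv n s t h • rGen n i j k hkj hji) }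

/-- The `S`-submodule of `F` spanned by `B`. -/
noncomputable def spanB (n : ℕ) : Submodule (Sn n) (Fn n) := Submodule.span (Sn n) (BSet n)

/-- The infinitesimal Alexander invariant `𝔅ₙ = F / span_S(B)` of `PΣₙ⁺`. -/
abbrev Bn (n : ℕ) := Fn n ⧸ spanB n

/-- The extra monomial generators `E = { x_{kp}·r_{ijk} : p < k < j < i }`. -/
noncomputable def ESet (n : ℕ) : Set (Fn n) :=
  { w | ∃ (i j k : Fin n) (hkj : k < j) (hji : j < i) (p : Fin n) (hp : p < k),
      w = Xv n k p hp • rGen n i j k hkj hji }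

/-- The `S`-submodule of `F` spanned by `B ∪ E`. -/
noncomputable def spanB' (n : ℕ) : Submodule (Sn n) (Fn n) :=
  Submodule.span (Sn n) (BSet n ∪ ESet n)

/-- The quotient module `𝔅ₙ' = F / span_S(B ∪ E)`. -/
abbrev Bn' (n : ℕ) := Fn n ⧸ spanB' n

/-- Index set for the basis `e_{ijkl}` (`l < k < j < i`). -/
abbrev QIdx (n : ℕ) :=
  { q : Fin n × Fin n × Fin n × Fin n //
      q.2.2.2 < q.2.2.1 ∧ q.2.2.1 < q.2.1 ∧ q.2.1 < q.1 }

/-- The free `S`-module `F'` with basis `{e_{ijkl} : l < k < j < i}`. -/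
abbrev F'n (n : ℕ) := QIdx n → Sn n

/-- The basis element `e_{ijkl}` of `F'`. -/
noncomputable def eGen (n : ℕ) (i j k l : Fin n) (h1 : l < k) (h2 : k < j) (h3 : j < i) :
    F'n n :=
  Pi.single ⟨(i, j, k, l), h1, h2, h3⟩ 1

/-- The generating set `{ x_{st}·e_{ijkl} : t < s, (s,t) ≠ (i,j) }`. -/
noncomputable def JSet (n : ℕ) : Set (F'n n) :=
  { w | ∃ (i j k l : Fin n) (h1 : l < k) (h2 : k < j) (h3 : j < i)
      (s t : Fin n) (hts : t < s), (s, t) ≠ (i, j) ∧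
      w = Xv n s t hts • eGen n i j k l h1 h2 h3 }

/-- The `S`-submodule of `F'` spanned by the set above. -/
noncomputable def spanJ (n : ℕ) : Submodule (Sn n) (F'n n) := Submodule.span (Sn n) (JSet n)

/-- The module `Kₙ = F' / span_S{x_{st}·e_{ijkl} : (s,t) ≠ (i,j)}`. -/
abbrev Kn (n : ℕ) := F'n n ⧸ spanJ n

/-- The degree-`k` graded piece of the free module `F` (basis in degree `0`). -/
noncomputable def FnDeg (n k : ℕ) : Submodule ℂ (Fn n) :=
  Submodule.pi Set.univ fun _ => MvPolynomial.homogeneousSubmodule (PIdx n) ℂ k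

/-- The degree-`k` graded piece of the free module `F'` (basis in degree `0`). -/
noncomputable def F'nDeg (n k : ℕ) : Submodule ℂ (F'n n) :=
  Submodule.pi Set.univ fun _ => MvPolynomial.homogeneousSubmodule (PIdx n) ℂ k

/-- The degree-`k` graded piece of `𝔅ₙ'`. -/
noncomputable def Bn'Deg (n k : ℕ) : Submodule ℂ (Bn' n) :=
  Submodule.span ℂ ((Submodule.Quotient.mk : Fn n → Bn' n) '' (FnDeg n k))

/-- The degree-`k` graded piece of `Kₙ`. -/
noncomputable def KnDeg (n k : ℕ) : Submodule ℂ (Kn n) :=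
  Submodule.span ℂ ((Submodule.Quotient.mk : F'n n → Kn n) '' (F'nDeg n k))


open MvPolynomial Finset
set_option synthInstance.maxHeartbeats 1000000
set_option maxHeartbeats 1000000
set_option linter.unusedVariables false

-- hockey-stick style
lemma sum_range_choose_succ (m r : ℕ) :
    ∑ x ∈ Finset.range m, x.choose r = m.choose (r+1) := by
  induction m with
  | zero => simp
  | succ m ih => rw [Finset.sum_range_succ, ih, Nat.choose_succ_succ' (m) r, Nat.add_comm]


def e4 {n : ℕ} : QIdx n ≃ Σ (i : Fin n), Σ (j : Fin i.1), Σ (k : Fin j.1), Fin k.1 where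
  toFun q := ⟨q.1.1, ⟨q.1.2.1.1, q.2.2.2⟩, ⟨q.1.2.2.1.1, q.2.2.1⟩, ⟨q.1.2.2.2.1, q.2.1⟩⟩
  invFun x :=
    ⟨(x.1, ⟨x.2.1.1, x.2.1.isLt.trans x.1.isLt⟩,
        ⟨x.2.2.1.1, (x.2.2.1.isLt.trans x.2.1.isLt).trans x.1.isLt⟩,
        ⟨x.2.2.2.1, ((x.2.2.2.isLt.trans x.2.2.1.isLt).trans x.2.1.isLt).trans x.1.isLt⟩),
      x.2.2.2.isLt, x.2.2.1.isLt, x.2.1.isLt⟩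
  left_inv q := rfl
  right_inv x := rfl

lemma card_QIdx (n : ℕ) : Fintype.card (QIdx n) = n.choose 4 := by
  rw [Fintype.card_congr e4]
  simp [Fintype.card_sigma]
  calc ∑ i : Fin n, ∑ j : Fin i.1, ∑ k : Fin j.1, k.1
      = ∑ i ∈ Finset.range n, ∑ j ∈ Finset.range i, ∑ k ∈ Finset.range j, k := by
        rw [Fin.sum_univ_eq_sum_range (fun i => ∑ j : Fin i, ∑ k : Fin j.1, k.1)]
        refine Finset.sum_congr rfl fun i _ => ?_
        rw [Fin.sum_univ_eq_sum_range (fun j => ∑ k : Fin j, k.1)]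
        refine Finset.sum_congr rfl fun j _ => ?_
        exact Fin.sum_univ_eq_sum_range (fun k => k) j
    _ = n.choose 4 := by
        calc ∑ i ∈ Finset.range n, ∑ j ∈ Finset.range i, ∑ k ∈ Finset.range j, k
            = ∑ i ∈ Finset.range n, ∑ j ∈ Finset.range i, j.choose 2 := by
              refine Finset.sum_congr rfl fun i _ => Finset.sum_congr rfl fun j _ => ?_
              calc ∑ k ∈ Finset.range j, k = ∑ k ∈ Finset.range j, k.choose 1 := by simp
              _ = j.choose 2 := sum_range_choose_succ j 1
          _ = ∑ i ∈ Finset.range n, i.choose 3 := by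
              exact Finset.sum_congr rfl fun i _ => sum_range_choose_succ i 2
          _ = n.choose 4 := sum_range_choose_succ n 3


section KnPart
variable {n : ℕ}

lemma smul_piSingle {ι : Type*} [DecidableEq ι] (p c : Sn n) (t : ι) :
    p • (Pi.single t c : ι → Sn n) = Pi.single t (p * c) := by
  funext t'
  by_cases h : t' = t
  · subst h; simp
  · simp [Pi.single_eq_of_ne h]

/-- top pair of a 4-index. -/
def topQ (q : QIdx n) : PIdx n := ⟨(q.1.1, q.1.2.1), q.2.2.2⟩

/-- The coefficient-extraction functional for `Kn`. -/
noncomputable def PsiK (n k : ℕ) : F'n n →ₗ[ℂ] (QIdx n → ℂ) where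
  toFun f := fun q => MvPolynomial.coeff (Finsupp.single (topQ q) k) (f q)
  map_add' f g := by funext q; simp [MvPolynomial.coeff_add]
  map_smul' c f := by funext q; simp [MvPolynomial.coeff_smul]

lemma PsiK_vanish (k : ℕ) : ∀ x ∈ spanJ n, ∀ p : Sn n, PsiK n k (p • x) = 0 := by
  intro x hx
  refine Submodule.span_induction ?_ ?_ ?_ ?_ hx
  · rintro w ⟨i, j, k', l, h1, h2, h3, s, t, hts, hne, rfl⟩ p
    funext q
    show MvPolynomial.coeff _ ((p • (Xv n s t hts • eGen n i j k' l h1 h2 h3)) q) = 0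
    rw [smul_smul, eGen, smul_piSingle]
    by_cases hq : q = ⟨(i, j, k', l), h1, h2, h3⟩
    · subst hq
      rw [Pi.single_eq_same, mul_one, Xv, MvPolynomial.coeff_mul_X']
      rw [if_neg]
      intro hmem
      have := Finsupp.support_single_subset hmem
      simp only [Finset.mem_singleton] at this
      apply hne
      have : (⟨(s,t), hts⟩ : PIdx n) = topQ (⟨(i, j, k', l), h1, h2, h3⟩ : QIdx n) := this
      have h2 := congrArg Subtype.val this
      simpa [topQ, Prod.ext_iff] using h2
    · rw [Pi.single_eq_of_ne hq]
      simp
  · intro p; simp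
  · intro x y _ _ hx hy p
    rw [smul_add, map_add, hx, hy, add_zero]
  · intro c x _ hx p
    rw [smul_smul]
    exact hx (p * c)


/-- `PsiK` descended to the quotient `Kn`. -/
noncomputable def PsiKbar (n k : ℕ) : Kn n →ₗ[ℂ] (QIdx n → ℂ) :=
  (Submodule.liftQ ((spanJ n).restrictScalars ℂ) (PsiK n k)
    (fun x hx => by simpa using PsiK_vanish (n := n) k x hx 1)) ∘ₗ
    (Submodule.Quotient.restrictScalarsEquiv ℂ (spanJ n)).symm.toLinearMap

lemma PsiKbar_mk (k : ℕ) (f : F'n n) :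
    PsiKbar n k (Submodule.Quotient.mk f) = PsiK n k f := by
  rfl

/-- Candidate basis for `(Kn)_k`. -/
noncomputable def vK (n k : ℕ) (q : QIdx n) : Kn n :=
  Submodule.Quotient.mk ((MvPolynomial.X (topQ q) ^ k : Sn n) • (Pi.single q 1 : F'n n))

lemma PsiKbar_vK (k : ℕ) (q : QIdx n) :
    PsiKbar n k (vK n k q) = Pi.single q 1 := by
  rw [vK, PsiKbar_mk]
  funext q'
  show MvPolynomial.coeff _ ((MvPolynomial.X (topQ q) ^ k • (Pi.single q 1 : F'n n)) q') = _
  rw [smul_piSingle]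
  by_cases h : q' = q
  · subst h
    rw [Pi.single_eq_same, Pi.single_eq_same, mul_one, MvPolynomial.X_pow_eq_monomial,
      MvPolynomial.coeff_monomial, if_pos rfl]
  · rw [Pi.single_eq_of_ne h, Pi.single_eq_of_ne h]
    simp

lemma vK_linearIndependent (k : ℕ) : LinearIndependent ℂ (vK n k) := by
  apply LinearIndependent.of_comp (PsiKbar n k)
  have : (PsiKbar n k) ∘ (vK n k) = fun q => Pi.single q 1 := by
    funext q; exact PsiKbar_vK k q
  rw [this]
  have hb := (Pi.basisFun ℂ (QIdx n)).linearIndependent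
  convert hb using 1
  funext q
  simp [Pi.basisFun_apply]

lemma X_smul_single_mem_spanJ (b : PIdx n) (q : QIdx n) (hb : b ≠ topQ q) :
    (MvPolynomial.X b : Sn n) • (Pi.single q 1 : F'n n) ∈ spanJ n := by
  apply Submodule.subset_span
  refine ⟨q.1.1, q.1.2.1, q.1.2.2.1, q.1.2.2.2, q.2.1, q.2.2.1, q.2.2.2,
    b.1.1, b.1.2, b.2, ?_, ?_⟩
  · intro h
    apply hb
    apply Subtype.ext
    simpa [topQ, Prod.ext_iff] using h
  · rw [Xv, eGen]

lemma mk_monomial_single_mem (k : ℕ) (m : PIdx n →₀ ℕ) (q : QIdx n)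
    (hm : (m.sum fun _ e => e) = k) :
    (Submodule.Quotient.mk ((MvPolynomial.monomial m 1 : Sn n) • (Pi.single q 1 : F'n n)) : Kn n)
      ∈ Submodule.span ℂ (Set.range (vK n k)) := by
  by_cases hall : m = Finsupp.single (topQ q) k
  · subst hall
    rw [← MvPolynomial.X_pow_eq_monomial]
    exact Submodule.subset_span ⟨q, rfl⟩
  · -- some variable b ≠ topQ q occurs in m
    have hex : ∃ b ∈ m.support, b ≠ topQ q := by
      by_contra hno
      push_neg at hno
      have hsub : m.support ⊆ {topQ q} := fun b hb => Finset.mem_singleton.mpr (hno b hb)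
      rw [Finsupp.support_subset_singleton] at hsub
      apply hall
      rw [hsub]
      congr 1
      rw [← hm, hsub, Finsupp.sum_single_index]
      · simp
      · rfl
    obtain ⟨b, hbs, hbne⟩ := hex
    have hmadd : (m - Finsupp.single b 1) + Finsupp.single b 1 = m := by
      ext c
      by_cases hc : c = b
      · subst hc
        have := Finsupp.mem_support_iff.mp hbs
        simp only [Finsupp.add_apply, Finsupp.tsub_apply, Finsupp.single_eq_same]
        omega
      · simp [Finsupp.single_eq_of_ne' (Ne.symm hc)]
    have hsplit : (MvPolynomial.monomial m 1 : Sn n)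
        = MvPolynomial.monomial (m - Finsupp.single b 1) 1 * MvPolynomial.X b := by
      rw [MvPolynomial.X, MvPolynomial.monomial_mul, mul_one, hmadd]
    have : (MvPolynomial.monomial m 1 : Sn n) • (Pi.single q 1 : F'n n) ∈ spanJ n := by
      rw [hsplit, ← smul_smul]
      exact Submodule.smul_mem _ _ (X_smul_single_mem_spanJ b q hbne)
    rw [(Submodule.Quotient.mk_eq_zero _).mpr this]
    exact Submodule.zero_mem _

lemma KnDeg_eq_span (k : ℕ) : KnDeg n k = Submodule.span ℂ (Set.range (vK n k)) := by
  apply le_antisymm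
  · rw [KnDeg, Submodule.span_le]
    rintro _ ⟨f, hf, rfl⟩
    rw [SetLike.mem_coe]
    have hdec : f = ∑ q : QIdx n, Pi.single q (f q) := by
      funext q'
      rw [Finset.sum_apply, Finset.sum_eq_single q']
      · simp
      · intro b _ hb; exact Pi.single_eq_of_ne (Ne.symm hb) _
      · intro h; exact absurd (Finset.mem_univ q') h
    rw [hdec, ← (spanJ n).mkQ_apply, map_sum]
    apply Submodule.sum_mem
    intro q _
    have hfq : (f q).IsHomogeneous k := hf q (Set.mem_univ q)
    have h1 : ∀ m ∈ (f q).support, (MvPolynomial.coeff m (f q)) •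
          ((MvPolynomial.monomial m 1 : Sn n) • (Pi.single q 1 : F'n n))
        = Pi.single q (MvPolynomial.monomial m (MvPolynomial.coeff m (f q))) := by
      intro m _
      rw [smul_piSingle, mul_one, ← Pi.single_smul, MvPolynomial.smul_monomial,
        smul_eq_mul, mul_one]
    have hexp : (Pi.single q (f q) : F'n n)
        = ∑ m ∈ (f q).support, (MvPolynomial.coeff m (f q)) •
            ((MvPolynomial.monomial m 1 : Sn n) • (Pi.single q 1 : F'n n)) := by
      rw [Finset.sum_congr rfl h1]
      funext q'
      rw [Finset.sum_apply]
      by_cases hq : q' = q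
      · subst hq
        simp only [Pi.single_eq_same]
        exact (MvPolynomial.support_sum_monomial_coeff _).symm
      · simp [Pi.single_eq_of_ne hq]
    rw [hexp, map_sum]
    apply Submodule.sum_mem
    intro m hms
    rw [(spanJ n).mkQ_apply, Submodule.Quotient.mk_smul]
    apply Submodule.smul_mem
    apply mk_monomial_single_mem
    have hw := hfq (MvPolynomial.mem_support_iff.mp hms)
    replace hw : Finsupp.degree m = k := by rw [Finsupp.degree_eq_weight_one]; exact hw
    simpa [Finsupp.degree_apply, Finsupp.sum] using hw
  · rw [Submodule.span_le]
    rintro _ ⟨q, rfl⟩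
    apply Submodule.subset_span
    refine ⟨_, ?_, rfl⟩
    intro q' _
    rw [SetLike.mem_coe, MvPolynomial.mem_homogeneousSubmodule]
    rw [smul_piSingle, mul_one]
    by_cases h : q' = q
    · subst h
      rw [Pi.single_eq_same]
      simpa using (MvPolynomial.isHomogeneous_X ℂ (topQ q')).pow k
    · rw [Pi.single_eq_of_ne h]
      exact MvPolynomial.isHomogeneous_zero _ _ _


lemma rank_KnDeg (k : ℕ) (n : ℕ) : Module.rank ℂ (KnDeg n k) = ((n.choose 4 : ℕ) : Cardinal) := by
  rw [KnDeg_eq_span (n := n) k, rank_span (vK_linearIndependent k),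
    ]
  rw [Cardinal.mk_range_eq _ (vK_linearIndependent k).injective, Cardinal.mk_fintype]
  exact congrArg Nat.cast (card_QIdx n)

end KnPart


section BnPart
variable {n : ℕ}

/-- top pair of a triple. -/
def pairT (t : TIdx n) : PIdx n := ⟨(t.1.1, t.1.2.1), t.2.2⟩
/-- low pair `(j,k)` of a triple. -/
def lowP (t : TIdx n) : PIdx n := ⟨(t.1.2.1, t.1.2.2), t.2.1⟩

@[simp] lemma pairT_mk (i j k : Fin n) (h1 : k < j) (h2 : j < i) :
    pairT (⟨(i, j, k), h1, h2⟩ : TIdx n) = ⟨(i, j), h2⟩ := rfl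
@[simp] lemma lowP_mk (i j k : Fin n) (h1 : k < j) (h2 : j < i) :
    lowP (⟨(i, j, k), h1, h2⟩ : TIdx n) = ⟨(j, k), h1⟩ := rfl

/-- the substitution associated with a pair `p = (i,j)`: `x_{ij} ↦ x_{ij}`,
`x_{jl} ↦ x_{jl}`, `x_{il} ↦ -x_{jl}` for `l < j`, all other variables to `0`. -/
noncomputable def piv (p : PIdx n) (q : PIdx n) : Sn n :=
  if q.1.1 = p.1.2 then MvPolynomial.X q
  else if q = p then MvPolynomial.X p
  else if h : q.1.1 = p.1.1 ∧ q.1.2 < p.1.2 then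
    - MvPolynomial.X ⟨(p.1.2, q.1.2), h.2⟩
  else 0

noncomputable def Pimap (p : PIdx n) : Sn n →ₐ[ℂ] Sn n := MvPolynomial.aeval (piv p)

lemma piv_low (p q : PIdx n) (h : q.1.1 = p.1.2) : piv p q = MvPolynomial.X q := by
  rw [piv, if_pos h]

lemma piv_top (p : PIdx n) : piv p p = MvPolynomial.X p := by
  rw [piv, if_neg (ne_of_gt p.2), if_pos rfl]

lemma piv_conv (p q : PIdx n) (h1 : q.1.1 = p.1.1) (h2 : q.1.2 < p.1.2) :
    piv p q = - MvPolynomial.X ⟨(p.1.2, q.1.2), h2⟩ := by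
  rw [piv, if_neg, if_neg, dif_pos ⟨h1, h2⟩]
  · intro hq
    rw [hq] at h2
    exact lt_irrefl _ h2
  · rw [h1]
    exact ne_of_gt p.2

lemma piv_zero (p q : PIdx n) (h1 : q.1.1 ≠ p.1.1) (h2 : q.1.1 ≠ p.1.2) : piv p q = 0 := by
  rw [piv, if_neg h2, if_neg, dif_neg]
  · rintro ⟨ha, -⟩; exact h1 ha
  · intro hq
    rw [hq] at h1
    exact h1 rfl

lemma piv_zero' (p q : PIdx n) (h1 : q.1.1 = p.1.1) (h2 : p.1.2 < q.1.2) : piv p q = 0 := by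
  rw [piv, if_neg, if_neg, dif_neg]
  · rintro ⟨-, hb⟩; exact absurd (h2.trans hb) (lt_irrefl _)
  · intro hq
    rw [hq] at h2
    exact absurd h2 (lt_irrefl _)
  · rw [h1]
    exact ne_of_gt p.2

lemma Pimap_Xv (p : PIdx n) (a b : Fin n) (h : b < a) :
    Pimap p (Xv n a b h) = piv p ⟨(a, b), h⟩ :=
  MvPolynomial.aeval_X _ _

lemma Pimap_X (p q : PIdx n) : Pimap p (MvPolynomial.X q) = piv p q :=
  MvPolynomial.aeval_X _ _

/-- The family of functionals on `F` (plain function). -/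
noncomputable def PhiBfun (n : ℕ) (f : Fn n) : PIdx n → Sn n := fun p =>
  ∑ t : TIdx n, if pairT t = p then MvPolynomial.X (lowP t) * Pimap p (f t) else 0

lemma PhiBfun_add (f g : Fn n) : PhiBfun n (f + g) = PhiBfun n f + PhiBfun n g := by
  funext p
  rw [Pi.add_apply, PhiBfun, PhiBfun, PhiBfun, ← Finset.sum_add_distrib]
  refine Finset.sum_congr rfl fun t _ => ?_
  rw [Pi.add_apply, map_add, mul_add]
  by_cases h : pairT t = p
  · rw [if_pos h, if_pos h, if_pos h]
  · rw [if_neg h, if_neg h, if_neg h, add_zero]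

lemma PhiBfun_smul (c : ℂ) (f : Fn n) : PhiBfun n (c • f) = c • PhiBfun n f := by
  funext p
  rw [Pi.smul_apply, PhiBfun, PhiBfun, Finset.smul_sum]
  refine Finset.sum_congr rfl fun t _ => ?_
  rw [Pi.smul_apply, map_smul, mul_smul_comm]
  by_cases h : pairT t = p
  · rw [if_pos h, if_pos h]
  · rw [if_neg h, if_neg h, smul_zero]

noncomputable def PhiB (n : ℕ) : Fn n →ₗ[ℂ] (PIdx n → Sn n) :=
  { toFun := PhiBfun n, map_add' := PhiBfun_add, map_smul' := PhiBfun_smul }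

lemma PhiB_smul_single (q : Sn n) (t : TIdx n) (p : PIdx n) :
    PhiB n (q • (Pi.single t 1 : Fn n)) p
      = if pairT t = p then MvPolynomial.X (lowP t) * Pimap p q else 0 := by
  show (∑ t' : TIdx n, if pairT t' = p
      then MvPolynomial.X (lowP t') * Pimap p ((q • (Pi.single t 1 : Fn n)) t') else 0) = _
  rw [Finset.sum_eq_single t]
  · rw [Pi.smul_apply, Pi.single_eq_same, smul_eq_mul, mul_one]
  · intro t' _ hne
    rw [Pi.smul_apply, Pi.single_eq_of_ne hne, smul_eq_mul, mul_zero, map_zero, mul_zero,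
      ite_self]
  · intro h; exact absurd (Finset.mem_univ t) h

lemma PhiB_smul_rGen (q : Sn n) (i j k : Fin n) (h1 : k < j) (h2 : j < i) (p : PIdx n) :
    PhiB n (q • rGen n i j k h1 h2) p
      = if (⟨(i, j), h2⟩ : PIdx n) = p
        then MvPolynomial.X (⟨(j, k), h1⟩ : PIdx n) * Pimap p q else 0 :=
  PhiB_smul_single q _ p


lemma PhiB_vanish : ∀ x ∈ spanB' n, ∀ q : Sn n, PhiB n (q • x) = 0 := by
  intro x hx
  refine Submodule.span_induction ?_ ?_ ?_ ?_ hx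
  · rintro w (⟨i, j, k, hkj, hji, hw⟩ | ⟨i, j, k, hkj, hji, p', hp', rfl⟩)
    · rcases hw with ⟨l,h1,h2,rfl⟩|⟨l,h1,h2,rfl⟩|⟨l,h1,h2,rfl⟩|⟨l,h1,rfl⟩|⟨l,h1,rfl⟩|rfl|
        ⟨l,h1,h2,rfl⟩|⟨l,h1,h2,rfl⟩|⟨l,h1,h2,rfl⟩|⟨l,h1,rfl⟩|⟨l,h1,rfl⟩|
        ⟨s,t,hts,hsi,hsj,hsk,hti,htj,htk,rfl⟩
      -- g₁
      · intro q
        funext p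
        simp only [smul_add, smul_smul, map_add, Pi.add_apply, PhiB_smul_rGen,
          Pi.zero_apply, map_mul, map_sub, map_neg, Xv, Pimap_X]
        split_ifs with hp1
        · subst hp1
          rw [piv_low _ _ rfl, piv_zero _ _ (ne_of_lt (h2.trans hji)) (ne_of_lt h2),
            piv_low _ _ rfl]
          ring
        · rw [add_zero]
      -- g₂
      · intro q
        funext p
        simp only [smul_add, smul_smul, map_add, Pi.add_apply, PhiB_smul_rGen,
          Pi.zero_apply, map_mul, Xv, Pimap_X]
        split_ifs with hp1
        · subst hp1
          rw [piv_low _ _ rfl, piv_conv ⟨(i,j),hji⟩ ⟨(i,l), h2.trans hji⟩ rfl h2]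
          ring
        · rw [add_zero]
      -- g₃
      · intro q
        funext p
        rw [← neg_smul]
        simp only [smul_add, smul_smul, map_add, Pi.add_apply, PhiB_smul_rGen,
          Pi.zero_apply, map_mul, map_neg, Xv, Pimap_X]
        split_ifs with hp1 hp2 hp2
        · exfalso
          have := hp1.trans hp2.symm
          have hlj := congrArg (fun x => x.val.2) this
          exact absurd hlj (ne_of_gt h1)
        · subst hp1
          rw [piv_zero _ _ (ne_of_lt hji) (ne_of_lt h1)]
          ring
        · subst hp2
          rw [piv_zero' ⟨(i,j),hji⟩ ⟨(i,l), h2⟩ rfl h1]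
          ring
        · rw [add_zero]
      -- g₄
      · intro q
        funext p
        simp only [smul_add, smul_smul, map_add, Pi.add_apply, PhiB_smul_rGen,
          Pi.zero_apply, map_mul, Xv, Pimap_X]
        split_ifs with hp1 hp2 hp2
        · exfalso
          have hh := hp1.trans hp2.symm
          exact absurd (congrArg (fun x => x.val.1) hh) (ne_of_gt h1)
        · subst hp1
          rw [piv_zero _ _ (ne_of_lt (hji.trans h1)) (ne_of_lt hji)]
          ring
        · subst hp2
          rw [piv_zero _ _ (ne_of_gt h1) (ne_of_gt (hji.trans h1))]
          ring
        · rw [add_zero]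
      -- h₁
      · intro q
        funext p
        simp only [smul_smul, Pi.zero_apply, PhiB_smul_rGen, map_mul, map_add, Xv, Pimap_X]
        split_ifs with hp1
        · subst hp1
          rw [piv_conv ⟨(i,j),hji⟩ ⟨(i,l), h1.trans (hkj.trans hji)⟩ rfl (h1.trans hkj),
            piv_low _ _ rfl, piv_zero _ _ (ne_of_lt (hkj.trans hji)) (ne_of_lt hkj)]
          ring
        · rfl
      -- h₂
      · intro q
        funext p
        simp only [smul_smul, Pi.zero_apply, PhiB_smul_rGen, map_mul, map_add, Xv, Pimap_X]
        split_ifs with hp1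
        · subst hp1
          rw [piv_conv ⟨(i,j),hji⟩ ⟨(i,k), hkj.trans hji⟩ rfl hkj, piv_low _ _ rfl]
          ring
        · rfl
      -- h₃
      · intro q
        funext p
        simp only [smul_smul, Pi.zero_apply, PhiB_smul_rGen, map_mul, Xv, Pimap_X]
        split_ifs with hp1
        · subst hp1
          rw [piv_zero _ _ (ne_of_lt (h2.trans hji)) (ne_of_lt h2)]
          ring
        · rfl
      -- h₄
      · intro q
        funext p
        simp only [smul_smul, Pi.zero_apply, PhiB_smul_rGen, map_mul, Xv, Pimap_X]
        split_ifs with hp1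
        · subst hp1
          rw [piv_zero _ _ (ne_of_lt h2) (ne_of_gt h1)]
          ring
        · rfl
      -- h₅
      · intro q
        funext p
        simp only [smul_smul, Pi.zero_apply, PhiB_smul_rGen, map_mul, Xv, Pimap_X]
        split_ifs with hp1
        · subst hp1
          rw [piv_zero _ _ (ne_of_lt h2) (ne_of_gt h1)]
          ring
        · rfl
      -- h₆
      · intro q
        funext p
        simp only [smul_smul, Pi.zero_apply, PhiB_smul_rGen, map_mul, Xv, Pimap_X]
        split_ifs with hp1
        · subst hp1
          rw [piv_zero _ _ (ne_of_gt h1) (ne_of_gt (hji.trans h1))]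
          ring
        · rfl
      -- h₇
      · intro q
        funext p
        simp only [smul_smul, Pi.zero_apply, PhiB_smul_rGen, map_mul, Xv, Pimap_X]
        split_ifs with hp1
        · subst hp1
          rw [piv_zero _ _ (ne_of_gt h1) (ne_of_gt (hji.trans h1))]
          ring
        · rfl
      -- h₈
      · intro q
        funext p
        simp only [smul_smul, Pi.zero_apply, PhiB_smul_rGen, map_mul, Xv, Pimap_X]
        split_ifs with hp1
        · subst hp1
          rw [piv_zero _ _ hsi hsj]
          ring
        · rfl
    -- E
    · intro q
      funext p
      simp only [smul_smul, Pi.zero_apply, PhiB_smul_rGen, map_mul, Xv, Pimap_X]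
      split_ifs with hp1
      · subst hp1
        rw [piv_zero _ _ (ne_of_lt (hkj.trans hji)) (ne_of_lt hkj)]
        ring
      · rfl
  · intro q; rw [smul_zero, map_zero]
  · intro x y _ _ hx hy q
    rw [smul_add, map_add, hx, hy, add_zero]
  · intro c x _ hx q
    rw [smul_smul]
    exact hx (q * c)

lemma memB {w : Fn n} (hw : w ∈ BSet n) : w ∈ spanB' n :=
  Submodule.subset_span (Or.inl hw)
lemma memE {w : Fn n} (hw : w ∈ ESet n) : w ∈ spanB' n :=
  Submodule.subset_span (Or.inr hw)

/-- All variables `x_{st}` with `s ∉ {i,j}` kill `r_{ijk}` in `Bn'`. -/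
lemma relZ (i j k s t' : Fin n) (hkj : k < j) (hji : j < i) (hts : t' < s)
    (hsi : s ≠ i) (hsj : s ≠ j) :
    Xv n s t' hts • rGen n i j k hkj hji ∈ spanB' n := by
  rcases lt_trichotomy s j with hsj' | heq | hjs
  · -- s < j
    rcases lt_trichotomy s k with hsk | rfl | hks
    · -- s < k : h₈
      apply memB
      refine ⟨i, j, k, hkj, hji, ?_⟩
      iterate 11 apply Or.inr
      exact ⟨s, t', hts, hsi, hsj, ne_of_lt hsk, ne_of_lt (hts.trans (hsk.trans (hkj.trans hji))),
        ne_of_lt (hts.trans (hsk.trans hkj)), ne_of_lt (hts.trans hsk), rfl⟩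
    · -- s = k : E
      exact memE ⟨i, j, s, hkj, hji, t', hts, rfl⟩
    · -- k < s < j
      rcases eq_or_ne t' k with rfl | htk
      · -- h₃
        apply memB
        refine ⟨i, j, t', hkj, hji, ?_⟩
        iterate 6 apply Or.inr
        exact Or.inl ⟨s, hks, hsj', rfl⟩
      · -- h₈
        apply memB
        refine ⟨i, j, k, hkj, hji, ?_⟩
        iterate 11 apply Or.inr
        exact ⟨s, t', hts, hsi, hsj, ne_of_gt hks, ne_of_lt (hts.trans (hsj'.trans hji)),
          ne_of_lt (hts.trans hsj'), htk, rfl⟩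
  · exact absurd heq hsj
  · -- j < s
    rcases lt_trichotomy s i with hsi' | heq | his
    · -- j < s < i
      rcases eq_or_ne t' k with rfl | htk
      · -- h₄
        apply memB
        refine ⟨i, j, t', hkj, hji, ?_⟩
        iterate 7 apply Or.inr
        exact Or.inl ⟨s, hjs, hsi', rfl⟩
      · rcases eq_or_ne t' j with rfl | htj
        · -- h₅
          apply memB
          refine ⟨i, t', k, hkj, hji, ?_⟩
          iterate 8 apply Or.inr
          exact Or.inl ⟨s, hjs, hsi', rfl⟩
        · -- h₈
          apply memB
          refine ⟨i, j, k, hkj, hji, ?_⟩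
          iterate 11 apply Or.inr
          exact ⟨s, t', hts, hsi, hsj, ne_of_gt (hkj.trans hjs), ne_of_lt (hts.trans hsi'),
            htj, htk, rfl⟩
    · exact absurd heq hsi
    · -- i < s
      rcases eq_or_ne t' i with rfl | hti
      · -- g₄ − E
        have hg : Xv n j k hkj • rGen n s t' j hji his + Xv n s t' his • rGen n t' j k hkj hji
            ∈ spanB' n := by
          apply memB
          refine ⟨t', j, k, hkj, hji, ?_⟩
          iterate 3 apply Or.inr
          exact Or.inl ⟨s, his, rfl⟩
        have he : Xv n j k hkj • rGen n s t' j hji his ∈ spanB' n :=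
          memE ⟨s, t', j, hji, his, k, hkj, rfl⟩
        have : Xv n s t' hts • rGen n t' j k hkj hji
            = (Xv n j k hkj • rGen n s t' j hji his + Xv n s t' his • rGen n t' j k hkj hji)
              - Xv n j k hkj • rGen n s t' j hji his := by
          rw [add_sub_cancel_left]
        rw [this]
        exact Submodule.sub_mem _ hg he
      · rcases eq_or_ne t' j with rfl | htj
        · -- h₇
          apply memB
          refine ⟨i, t', k, hkj, hji, ?_⟩
          iterate 10 apply Or.inr
          exact Or.inl ⟨s, his, rfl⟩
        · rcases eq_or_ne t' k with rfl | htk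
          · -- h₆
            apply memB
            refine ⟨i, j, t', hkj, hji, ?_⟩
            iterate 9 apply Or.inr
            exact Or.inl ⟨s, his, rfl⟩
          · -- h₈
            apply memB
            refine ⟨i, j, k, hkj, hji, ?_⟩
            iterate 11 apply Or.inr
            exact ⟨s, t', hts, hsi, hsj, ne_of_gt ((hkj.trans hji).trans his), hti, htj, htk, rfl⟩

/-- `x_{il} r_{ijk} = 0` in `Bn'` for `j < l < i`. -/
lemma relR2 (i j k l : Fin n) (hkj : k < j) (hji : j < i) (hjl : j < l) (hli : l < i) :
    Xv n i l hli • rGen n i j k hkj hji ∈ spanB' n := by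
  have hg : -(Xv n j k hkj • rGen n i l j hjl hli) + Xv n i l hli • rGen n i j k hkj hji
      ∈ spanB' n := by
    apply memB
    refine ⟨i, j, k, hkj, hji, ?_⟩
    iterate 2 apply Or.inr
    exact Or.inl ⟨l, hjl, hli, rfl⟩
  have he : Xv n j k hkj • rGen n i l j hjl hli ∈ spanB' n :=
    memE ⟨i, l, j, hjl, hli, k, hkj, rfl⟩
  have : Xv n i l hli • rGen n i j k hkj hji
      = (-(Xv n j k hkj • rGen n i l j hjl hli) + Xv n i l hli • rGen n i j k hkj hji)
        + Xv n j k hkj • rGen n i l j hjl hli := by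
    module
  rw [this]
  exact Submodule.add_mem _ hg he

/-- `(x_{il} + x_{jl}) r_{ijk} = 0` in `Bn'` for `l < j`. -/
lemma relConv (i j k l : Fin n) (hkj : k < j) (hji : j < i) (hlj : l < j) :
    (Xv n i l (hlj.trans hji) + Xv n j l hlj) • rGen n i j k hkj hji ∈ spanB' n := by
  rcases lt_trichotomy l k with hlk | rfl | hkl
  · have hg : (Xv n i l (hlk.trans (hkj.trans hji)) + Xv n j l (hlk.trans hkj)
        + Xv n k l hlk) • rGen n i j k hkj hji ∈ spanB' n := by
      apply memB
      refine ⟨i, j, k, hkj, hji, ?_⟩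
      iterate 4 apply Or.inr
      exact Or.inl ⟨l, hlk, rfl⟩
    have he : Xv n k l hlk • rGen n i j k hkj hji ∈ spanB' n :=
      memE ⟨i, j, k, hkj, hji, l, hlk, rfl⟩
    have : (Xv n i l (hlj.trans hji) + Xv n j l hlj) • rGen n i j k hkj hji
        = (Xv n i l (hlk.trans (hkj.trans hji)) + Xv n j l (hlk.trans hkj)
            + Xv n k l hlk) • rGen n i j k hkj hji
          - Xv n k l hlk • rGen n i j k hkj hji := by
      module
    rw [this]
    exact Submodule.sub_mem _ hg he
  · apply memB
    refine ⟨i, j, l, hkj, hji, ?_⟩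
    iterate 5 apply Or.inr
    exact Or.inl rfl
  · have hg1 : (-Xv n j k hkj - Xv n l k hkl) • rGen n i j l hlj hji
        + Xv n j l hlj • rGen n i j k hkj hji ∈ spanB' n := by
      apply memB
      exact ⟨i, j, k, hkj, hji, Or.inl ⟨l, hkl, hlj, rfl⟩⟩
    have hg2 : Xv n j k hkj • rGen n i j l hlj hji
        + Xv n i l (hlj.trans hji) • rGen n i j k hkj hji ∈ spanB' n := by
      apply memB
      refine ⟨i, j, k, hkj, hji, ?_⟩
      apply Or.inr
      exact Or.inl ⟨l, hkl, hlj, rfl⟩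
    have he : Xv n l k hkl • rGen n i j l hlj hji ∈ spanB' n :=
      memE ⟨i, j, l, hlj, hji, k, hkl, rfl⟩
    have : (Xv n i l (hlj.trans hji) + Xv n j l hlj) • rGen n i j k hkj hji
        = ((-Xv n j k hkj - Xv n l k hkl) • rGen n i j l hlj hji
            + Xv n j l hlj • rGen n i j k hkj hji)
          + (Xv n j k hkj • rGen n i j l hlj hji
            + Xv n i l (hlj.trans hji) • rGen n i j k hkj hji)
          + Xv n l k hkl • rGen n i j l hlj hji := by
      module
    rw [this]
    exact Submodule.add_mem _ (Submodule.add_mem _ hg1 hg2) he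

/-- `x_{jl} r_{ijk} = x_{jk} r_{ijl}` in `Bn'` for `l, k < j`. -/
lemma relSwap (i j k l : Fin n) (hkj : k < j) (hji : j < i) (hlj : l < j) :
    Xv n j l hlj • rGen n i j k hkj hji - Xv n j k hkj • rGen n i j l hlj hji
      ∈ spanB' n := by
  rcases lt_trichotomy k l with hkl | rfl | hlk
  · have hg1 : (-Xv n j k hkj - Xv n l k hkl) • rGen n i j l hlj hji
        + Xv n j l hlj • rGen n i j k hkj hji ∈ spanB' n := by
      apply memB
      exact ⟨i, j, k, hkj, hji, Or.inl ⟨l, hkl, hlj, rfl⟩⟩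
    have he : Xv n l k hkl • rGen n i j l hlj hji ∈ spanB' n :=
      memE ⟨i, j, l, hlj, hji, k, hkl, rfl⟩
    have : Xv n j l hlj • rGen n i j k hkj hji - Xv n j k hkj • rGen n i j l hlj hji
        = ((-Xv n j k hkj - Xv n l k hkl) • rGen n i j l hlj hji
            + Xv n j l hlj • rGen n i j k hkj hji)
          + Xv n l k hkl • rGen n i j l hlj hji := by
      module
    rw [this]
    exact Submodule.add_mem _ hg1 he
  · simp
  · have hg1 : (-Xv n j l hlj - Xv n k l hlk) • rGen n i j k hkj hji
        + Xv n j k hkj • rGen n i j l hlj hji ∈ spanB' n := by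
      apply memB
      exact ⟨i, j, l, hlj, hji, Or.inl ⟨k, hlk, hkj, rfl⟩⟩
    have he : Xv n k l hlk • rGen n i j k hkj hji ∈ spanB' n :=
      memE ⟨i, j, k, hkj, hji, l, hlk, rfl⟩
    have : Xv n j l hlj • rGen n i j k hkj hji - Xv n j k hkj • rGen n i j l hlj hji
        = -((-Xv n j l hlj - Xv n k l hlk) • rGen n i j k hkj hji
            + Xv n j k hkj • rGen n i j l hlj hji)
          - Xv n k l hlk • rGen n i j k hkj hji := by
      module
    rw [this]
    exact Submodule.sub_mem _ (Submodule.neg_mem _ hg1) he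

/-- smul of a `Pi.single` (Bn' copy). -/
lemma smul_piSingleB {ι : Type*} [DecidableEq ι] (p c : Sn n) (t : ι) :
    p • (Pi.single t c : ι → Sn n) = Pi.single t (p * c) := by
  funext t'
  by_cases h : t' = t
  · subst h; simp
  · simp [Pi.single_eq_of_ne h]

/-- Allowed variables for the normal form at triple `t = (i,j,k)`:
`x_{ij}` and the `x_{jl}` with `k ≤ l < j`. -/
def AllowedV (t : TIdx n) (q : PIdx n) : Prop :=
  q = pairT t ∨ (q.1.1 = t.1.2.1 ∧ t.1.2.2 ≤ q.1.2)

/-- Monomials of degree `d` in the allowed variables of `t`. -/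
def MonT (n d : ℕ) (t : TIdx n) :=
  { m : PIdx n →₀ ℕ // (∀ q ∈ m.support, AllowedV t q) ∧ (m.sum fun _ e => e) = d }

/-- The candidate basis of `(Bn')_d`. -/
noncomputable def wB (n d : ℕ) (x : Σ t : TIdx n, MonT n d t) : Bn' n :=
  Submodule.Quotient.mk
    ((MvPolynomial.monomial x.2.val (1 : ℂ) : Sn n) • (Pi.single x.1 1 : Fn n))

def degF (m : PIdx n →₀ ℕ) : ℕ := m.sum fun _ e => e

lemma degF_add (a b : PIdx n →₀ ℕ) : degF (a + b) = degF a + degF b :=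
  Finsupp.sum_add_index' (fun _ => rfl) (fun _ _ _ => rfl)

lemma degF_single (b : PIdx n) (e : ℕ) : degF (Finsupp.single b e) = e :=
  Finsupp.sum_single_index rfl

/-- number of "to convert" variables (with multiplicity). -/
def cBad (p : PIdx n) (m : PIdx n →₀ ℕ) : ℕ :=
  m.sum fun q e => if q.1.1 = p.1.1 ∧ q.1.2 < p.1.2 then e else 0

lemma cBad_add (p : PIdx n) (a b : PIdx n →₀ ℕ) :
    cBad p (a + b) = cBad p a + cBad p b := by
  refine Finsupp.sum_add_index' (fun q => by simp) (fun q e1 e2 => ?_)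
  split_ifs <;> simp

lemma cBad_single (p : PIdx n) (b : PIdx n) (e : ℕ) :
    cBad p (Finsupp.single b e) = if b.1.1 = p.1.1 ∧ b.1.2 < p.1.2 then e else 0 := by
  refine Finsupp.sum_single_index ?_
  split_ifs <;> rfl

lemma finsupp_sub_add (m : PIdx n →₀ ℕ) (b : PIdx n) (hb : b ∈ m.support) :
    (m - Finsupp.single b 1) + Finsupp.single b 1 = m := by
  ext c
  by_cases hc : c = b
  · subst hc
    have := Finsupp.mem_support_iff.mp hb
    simp only [Finsupp.add_apply, Finsupp.tsub_apply, Finsupp.single_eq_same]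
    omega
  · simp [Finsupp.single_eq_of_ne' (Ne.symm hc)]

lemma mono_mul_X (a : PIdx n →₀ ℕ) (q : PIdx n) :
    (MvPolynomial.monomial a (1 : ℂ) : Sn n) * MvPolynomial.X q
      = MvPolynomial.monomial (a + Finsupp.single q 1) 1 := by
  rw [MvPolynomial.X, MvPolynomial.monomial_mul, mul_one]

lemma monomial_splitB (m : PIdx n →₀ ℕ) (b : PIdx n) (hb : b ∈ m.support) :
    (MvPolynomial.monomial m (1 : ℂ) : Sn n)
      = MvPolynomial.monomial (m - Finsupp.single b 1) 1 * MvPolynomial.X b := by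
  rw [mono_mul_X, finsupp_sub_add m b hb]

lemma span_mono_rGen (d : ℕ) : ∀ (c : ℕ) (m : PIdx n →₀ ℕ) (i j k : Fin n)
    (hkj : k < j) (hji : j < i),
    cBad ⟨(i, j), hji⟩ m = c → degF m = d →
    (Submodule.Quotient.mk
        ((MvPolynomial.monomial m (1 : ℂ) : Sn n) • rGen n i j k hkj hji) : Bn' n)
      ∈ Submodule.span ℂ (Set.range (wB n d)) := by
  intro c
  induction c using Nat.strong_induction_on with
  | _ c IH =>
  intro m i j k hkj hji hc hd
  by_cases hz : ∃ b ∈ m.support, (b.1.1 ≠ i ∧ b.1.1 ≠ j) ∨ (b.1.1 = i ∧ j < b.1.2)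
  · -- a "zero" variable occurs: the class is 0
    obtain ⟨b, hbs, hbz⟩ := hz
    have hX : (MvPolynomial.X b : Sn n) • rGen n i j k hkj hji ∈ spanB' n := by
      rcases hbz with ⟨hbi, hbj⟩ | ⟨hbi, hbj⟩
      · exact relZ i j k b.1.1 b.1.2 hkj hji b.2 hbi hbj
      · have hb2 : b.1.2 < i := hbi ▸ b.2
        have hbe : b = ⟨(i, b.1.2), hb2⟩ := Subtype.ext (Prod.ext hbi rfl)
        rw [hbe]
        exact relR2 i j k b.1.2 hkj hji hbj hb2
    have hmem : (MvPolynomial.monomial m (1 : ℂ) : Sn n) • rGen n i j k hkj hji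
        ∈ spanB' n := by
      rw [monomial_splitB m b hbs, ← smul_smul]
      exact Submodule.smul_mem _ _ hX
    rw [(Submodule.Quotient.mk_eq_zero _).mpr hmem]
    exact Submodule.zero_mem _
  · by_cases hcv : ∃ b ∈ m.support, b.1.1 = i ∧ b.1.2 < j
    · -- convert an `x_{il}` into `-x_{jl}`
      obtain ⟨b, hbs, hbi, hbj⟩ := hcv
      have hb2 : b.1.2 < i := hbi ▸ b.2
      have hbe : b = ⟨(i, b.1.2), hb2⟩ := Subtype.ext (Prod.ext hbi rfl)
      set l := b.1.2 with hl
      set q2 : PIdx n := ⟨(j, l), hbj⟩ with hq2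
      set m' := m - Finsupp.single b 1 + Finsupp.single q2 1 with hm'
      have hrel := relConv i j k l hkj hji hbj
      have hsum : (MvPolynomial.monomial m (1 : ℂ) : Sn n) • rGen n i j k hkj hji
          + (MvPolynomial.monomial m' (1 : ℂ) : Sn n) • rGen n i j k hkj hji
          ∈ spanB' n := by
        have hXb : (Xv n i l hb2 : Sn n) = MvPolynomial.X b := by rw [hbe]; rfl
        have heq : (MvPolynomial.monomial (m - Finsupp.single b 1) (1 : ℂ) : Sn n) •
            ((Xv n i l hb2 + Xv n j l hbj) • rGen n i j k hkj hji)
            = (MvPolynomial.monomial m (1 : ℂ) : Sn n) • rGen n i j k hkj hji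
              + (MvPolynomial.monomial m' (1 : ℂ) : Sn n) • rGen n i j k hkj hji := by
          rw [smul_smul, mul_add, hXb, mono_mul_X, finsupp_sub_add m b hbs]
          rw [show (Xv n j l hbj : Sn n) = MvPolynomial.X q2 from rfl, mono_mul_X, ← hm',
            add_smul]
        rw [← heq]
        exact Submodule.smul_mem _ _ hrel
      have hmk : (Submodule.Quotient.mk
            ((MvPolynomial.monomial m (1 : ℂ) : Sn n) • rGen n i j k hkj hji) : Bn' n)
          = -(Submodule.Quotient.mk
            ((MvPolynomial.monomial m' (1 : ℂ) : Sn n) • rGen n i j k hkj hji)) := by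
        apply eq_neg_of_add_eq_zero_left
        rw [← Submodule.Quotient.mk_add]
        exact (Submodule.Quotient.mk_eq_zero _).mpr hsum
      rw [hmk]
      apply Submodule.neg_mem
      -- bookkeeping for the induction
      have hcb : cBad ⟨(i, j), hji⟩ (m - Finsupp.single b 1) + 1 = c := by
        rw [← hc]
        conv_rhs => rw [← finsupp_sub_add m b hbs]
        rw [cBad_add, cBad_single, if_pos ⟨hbi, hbj⟩]
      have hcm' : cBad ⟨(i, j), hji⟩ m' = cBad ⟨(i, j), hji⟩ (m - Finsupp.single b 1) := by
        rw [hm', cBad_add, cBad_single, if_neg, add_zero]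
        rintro ⟨hh, -⟩
        exact absurd hh (ne_of_lt hji)
      have hdm' : degF m' = d := by
        have h1 : degF (m - Finsupp.single b 1) + 1 = d := by
          rw [← hd]
          conv_rhs => rw [← finsupp_sub_add m b hbs]
          rw [degF_add, degF_single]
        rw [hm', degF_add, degF_single]
        omega
      exact IH _ (by omega) m' i j k hkj hji (hcm'.trans rfl) hdm'
    · -- all variables allowed for the pair `(i,j)`
      push_neg at hz hcv
      have hall : ∀ b ∈ m.support, b = (⟨(i, j), hji⟩ : PIdx n) ∨ b.1.1 = j := by
        intro b hb
        by_cases hbi : b.1.1 = i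
        · left
          have h1 : b.1.2 ≤ j := (hz b hb).2 hbi
          have h2 : j ≤ b.1.2 := hcv b hb hbi
          exact Subtype.ext (Prod.ext hbi (le_antisymm h1 h2))
        · right
          exact (hz b hb).1 hbi
      set Ks : Finset (Fin n) :=
        insert k ((m.support.filter (fun q => q.1.1 = j)).image (fun q => q.1.2)) with hKs
      have hne : Ks.Nonempty := ⟨k, Finset.mem_insert_self _ _⟩
      set k0 := Ks.min' hne with hk0
      have hk0k : k0 ≤ k := Finset.min'_le _ _ (Finset.mem_insert_self _ _)
      have hylb : ∀ b ∈ m.support, b.1.1 = j → k0 ≤ b.1.2 := by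
        intro b hb hbj
        apply Finset.min'_le
        apply Finset.mem_insert_of_mem
        exact Finset.mem_image.mpr ⟨b, Finset.mem_filter.mpr ⟨hb, hbj⟩, rfl⟩
      rcases eq_or_lt_of_le hk0k with heq | hlt
      · apply Submodule.subset_span
        refine ⟨⟨⟨(i,j,k), hkj, hji⟩, ⟨m, ?_, hd⟩⟩, rfl⟩
        intro q hq
        rcases hall q hq with h | h
        · left; rw [h]; rfl
        · right
          refine ⟨h, ?_⟩
          show k ≤ q.1.2
          rw [← heq]
          exact hylb q hq h
      · have hk0m : k0 ∈ Ks := Finset.min'_mem _ hne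
        rw [hKs, Finset.mem_insert] at hk0m
        rcases hk0m with heq | hmem
        · exact absurd heq (ne_of_lt hlt)
        · obtain ⟨b0, hb0f, hb0v⟩ := Finset.mem_image.mp hmem
          obtain ⟨hb0s, hb0j⟩ := Finset.mem_filter.mp hb0f
          have hk0j : k0 < j := by
            rw [← hb0v]; exact hb0j ▸ b0.2
          have hbe : b0 = (⟨(j, k0), hk0j⟩ : PIdx n) := Subtype.ext (Prod.ext hb0j hb0v)
          set q2 : PIdx n := ⟨(j, k), hkj⟩ with hq2
          set m'' := m - Finsupp.single b0 1 + Finsupp.single q2 1 with hm''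
          have hswap := relSwap i j k k0 hkj hji hk0j
          have hdiff : (MvPolynomial.monomial m (1:ℂ) : Sn n) • rGen n i j k hkj hji
              - (MvPolynomial.monomial m'' (1:ℂ) : Sn n) • rGen n i j k0 hk0j hji
              ∈ spanB' n := by
            have hXb : (Xv n j k0 hk0j : Sn n) = MvPolynomial.X b0 := by rw [hbe]; rfl
            have heq2 : (MvPolynomial.monomial (m - Finsupp.single b0 1) (1:ℂ) : Sn n) •
                (Xv n j k0 hk0j • rGen n i j k hkj hji
                  - Xv n j k hkj • rGen n i j k0 hk0j hji)
                = (MvPolynomial.monomial m (1:ℂ) : Sn n) • rGen n i j k hkj hji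
                  - (MvPolynomial.monomial m'' (1:ℂ) : Sn n) • rGen n i j k0 hk0j hji := by
              rw [smul_sub, smul_smul, smul_smul, hXb, mono_mul_X,
                finsupp_sub_add m b0 hb0s,
                show (Xv n j k hkj : Sn n) = MvPolynomial.X q2 from rfl, mono_mul_X, ← hm'']
            rw [← heq2]
            exact Submodule.smul_mem _ _ hswap
          have hmk : (Submodule.Quotient.mk
                ((MvPolynomial.monomial m (1:ℂ) : Sn n) • rGen n i j k hkj hji) : Bn' n)
              = Submodule.Quotient.mk
                ((MvPolynomial.monomial m'' (1:ℂ) : Sn n) • rGen n i j k0 hk0j hji) :=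
            (Submodule.Quotient.eq _).mpr hdiff
          rw [hmk]
          apply Submodule.subset_span
          refine ⟨⟨⟨(i,j,k0), hk0j, hji⟩, ⟨m'', ?_, ?_⟩⟩, rfl⟩
          · intro b hb
            rcases Finset.mem_union.mp (Finsupp.support_add hb) with hb1 | hb2
            · have hbm : b ∈ m.support := Finsupp.support_tsub hb1
              rcases hall b hbm with h | h
              · left; rw [h]; rfl
              · right
                exact ⟨h, hylb b hbm h⟩
            · have hbq : b = q2 := Finset.mem_singleton.mp (Finsupp.support_single_subset hb2)
              right
              rw [hbq]
              exact ⟨rfl, le_of_lt hlt⟩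
          · have h1 : degF (m - Finsupp.single b0 1) + 1 = d := by
              rw [← hd]
              conv_rhs => rw [← finsupp_sub_add m b0 hb0s]
              rw [degF_add, degF_single]
            show degF m'' = d
            rw [hm'', degF_add, degF_single]
            omega

lemma Bn'Deg_eq_span (d : ℕ) : Bn'Deg n d = Submodule.span ℂ (Set.range (wB n d)) := by
  apply le_antisymm
  · rw [Bn'Deg, Submodule.span_le]
    rintro _ ⟨f, hf, rfl⟩
    rw [SetLike.mem_coe]
    have hdec : f = ∑ t : TIdx n, Pi.single t (f t) := by
      funext t'
      rw [Finset.sum_apply, Finset.sum_eq_single t']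
      · simp
      · intro b _ hb; exact Pi.single_eq_of_ne (Ne.symm hb) _
      · intro h; exact absurd (Finset.mem_univ t') h
    rw [hdec, ← (spanB' n).mkQ_apply, map_sum]
    apply Submodule.sum_mem
    intro t _
    have hft : (f t).IsHomogeneous d := hf t (Set.mem_univ t)
    have h1 : ∀ m ∈ (f t).support, (MvPolynomial.coeff m (f t)) •
          ((MvPolynomial.monomial m 1 : Sn n) • (Pi.single t 1 : Fn n))
        = Pi.single t (MvPolynomial.monomial m (MvPolynomial.coeff m (f t))) := by
      intro m _
      rw [smul_piSingleB, mul_one, ← Pi.single_smul, MvPolynomial.smul_monomial,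
        smul_eq_mul, mul_one]
    have hexp : (Pi.single t (f t) : Fn n)
        = ∑ m ∈ (f t).support, (MvPolynomial.coeff m (f t)) •
            ((MvPolynomial.monomial m 1 : Sn n) • (Pi.single t 1 : Fn n)) := by
      rw [Finset.sum_congr rfl h1]
      funext t'
      rw [Finset.sum_apply]
      by_cases ht : t' = t
      · subst ht
        simp only [Pi.single_eq_same]
        exact (MvPolynomial.support_sum_monomial_coeff _).symm
      · simp [Pi.single_eq_of_ne ht]
    rw [hexp, map_sum]
    apply Submodule.sum_mem
    intro m hms
    rw [(spanB' n).mkQ_apply, Submodule.Quotient.mk_smul]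
    apply Submodule.smul_mem
    have hdm : degF m = d := by
      have hw := hft (MvPolynomial.mem_support_iff.mp hms)
      replace hw : Finsupp.degree m = d := by rw [Finsupp.degree_eq_weight_one]; exact hw
      simpa [Finsupp.degree_apply, degF, Finsupp.sum] using hw
    exact span_mono_rGen d (cBad ⟨(t.1.1, t.1.2.1), t.2.2⟩ m) m t.1.1 t.1.2.1 t.1.2.2
      t.2.1 t.2.2 rfl hdm
  · rw [Submodule.span_le]
    rintro _ ⟨⟨t, m, hm⟩, rfl⟩
    apply Submodule.subset_span
    refine ⟨_, ?_, rfl⟩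
    intro t' _
    rw [SetLike.mem_coe, MvPolynomial.mem_homogeneousSubmodule]
    rw [smul_piSingleB, mul_one]
    by_cases h : t' = t
    · subst h
      rw [Pi.single_eq_same]
      apply MvPolynomial.isHomogeneous_monomial
      simpa [Finsupp.degree_apply, Finsupp.sum] using hm.2
    · rw [Pi.single_eq_of_ne h]
      exact MvPolynomial.isHomogeneous_zero _ _ _

noncomputable def PhiBbar (n : ℕ) : Bn' n →ₗ[ℂ] (PIdx n → Sn n) :=
  (Submodule.liftQ ((spanB' n).restrictScalars ℂ) (PhiB n)
    (fun x hx => by simpa using PhiB_vanish (n := n) x hx 1)) ∘ₗ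
    (Submodule.Quotient.restrictScalarsEquiv ℂ (spanB' n)).symm.toLinearMap

lemma PhiBbar_mk (f : Fn n) : PhiBbar n (Submodule.Quotient.mk f) = PhiB n f := rfl

lemma Pimap_monomial_allowed (t : TIdx n) (m : PIdx n →₀ ℕ)
    (hm : ∀ q ∈ m.support, AllowedV t q) :
    Pimap (pairT t) (MvPolynomial.monomial m 1) = MvPolynomial.monomial m 1 := by
  rw [Pimap, MvPolynomial.aeval_monomial, map_one, one_mul]
  conv_rhs => rw [MvPolynomial.monomial_eq, MvPolynomial.C_1, one_mul]
  apply Finsupp.prod_congr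
  intro q hq
  rcases hm q hq with h | ⟨h1, h2⟩
  · rw [h, piv_top]
  · rw [piv_low _ _ h1]

lemma PhiBbar_wB (d : ℕ) (x : Σ t : TIdx n, MonT n d t) :
    PhiBbar n (wB n d x)
      = Pi.single (pairT x.1)
          (MvPolynomial.monomial (x.2.val + Finsupp.single (lowP x.1) 1) 1) := by
  obtain ⟨t, m, hm⟩ := x
  rw [wB, PhiBbar_mk]
  funext p
  rw [PhiB_smul_single]
  by_cases hp : pairT t = p
  · subst hp
    rw [if_pos rfl, Pimap_monomial_allowed t m hm.1, Pi.single_eq_same, mul_comm, mono_mul_X]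
  · rw [if_neg hp, Pi.single_eq_of_ne (Ne.symm hp)]

/-- the index data extracted by the functional. -/
noncomputable def gIdx (n d : ℕ) (x : Σ t : TIdx n, MonT n d t) : (Σ _p : PIdx n, PIdx n →₀ ℕ) :=
  ⟨pairT x.1, x.2.val + Finsupp.single (lowP x.1) 1⟩

lemma gIdx_aux (i j k k' : Fin n) (hkj : k < j) (hkj' : k' < j) (hji : j < i)
    (m : PIdx n →₀ ℕ) (hm : ∀ q ∈ m.support, AllowedV ⟨(i,j,k), hkj, hji⟩ q)
    (hval : 0 < (m + Finsupp.single (⟨(j,k), hkj⟩ : PIdx n) (1 : ℕ)) (⟨(j,k'), hkj'⟩ : PIdx n)) :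
    k ≤ k' := by
  rw [Finsupp.add_apply] at hval
  by_cases he : (⟨(j,k'), hkj'⟩ : PIdx n) = ⟨(j,k), hkj⟩
  · have hkk : k' = k := congrArg (fun x => x.val.2) he
    exact le_of_eq hkk.symm
  · rw [Finsupp.single_apply, if_neg (fun h => he h.symm), add_zero] at hval
    have hsup : (⟨(j,k'), hkj'⟩ : PIdx n) ∈ m.support :=
      Finsupp.mem_support_iff.mpr (by omega)
    rcases hm _ hsup with h | ⟨h1, h2⟩
    · exfalso
      have : j = i := congrArg (fun x => x.val.1) h
      exact absurd this (ne_of_lt hji)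
    · exact h2

lemma gIdx_injective (n d : ℕ) : Function.Injective (gIdx n d) := by
  rintro ⟨⟨⟨i, j, k⟩, hkj, hji⟩, m, hm, hdm⟩ ⟨⟨⟨i', j', k'⟩, hkj', hji'⟩, m', hm', hdm'⟩ h
  rw [gIdx, gIdx, Sigma.mk.inj_iff] at h
  obtain ⟨h1, h2⟩ := h
  have hii : i = i' := congrArg (fun x => x.val.1) h1
  have hjj : j = j' := congrArg (fun x => x.val.2) h1
  subst hii; subst hjj
  have h2' : m + Finsupp.single (⟨(j,k), hkj⟩ : PIdx n) 1
      = m' + Finsupp.single (⟨(j,k'), hkj'⟩ : PIdx n) 1 := by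
    exact eq_of_heq h2
  have hk1 : k ≤ k' := by
    apply gIdx_aux i j k k' hkj hkj' hji m hm
    rw [h2', Finsupp.add_apply, Finsupp.single_eq_same]
    omega
  have hk2 : k' ≤ k := by
    apply gIdx_aux i j k' k hkj' hkj hji m' hm'
    rw [← h2', Finsupp.add_apply, Finsupp.single_eq_same]
    omega
  have hkk : k = k' := le_antisymm hk1 hk2
  subst hkk
  have hmm : m = m' := by
    have := h2'
    exact add_right_cancel this
  subst hmm
  rfl

lemma wB_linearIndependent (d : ℕ) : LinearIndependent ℂ (wB n d) := by
  apply LinearIndependent.of_comp (PhiBbar n)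
  have hcomp : (PhiBbar n) ∘ (wB n d) = (fun y : Σ _p : PIdx n, (PIdx n →₀ ℕ) =>
      Pi.single y.1 (MvPolynomial.monomial y.2 1)) ∘ gIdx n d := by
    funext x; exact PhiBbar_wB d x
  rw [hcomp]
  have hb := (Pi.basis (fun _ : PIdx n =>
    MvPolynomial.basisMonomials (PIdx n) ℂ)).linearIndependent
  have hbe : ⇑(Pi.basis (fun _ : PIdx n => MvPolynomial.basisMonomials (PIdx n) ℂ))
      = fun y : Σ _p : PIdx n, (PIdx n →₀ ℕ) =>
        Pi.single y.1 (MvPolynomial.monomial y.2 1) := by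
    funext y
    rw [Pi.basis_apply]
    rw [MvPolynomial.coe_basisMonomials]
  rw [hbe] at hb
  exact hb.comp (gIdx n d) (gIdx_injective n d)

instance (t : TIdx n) : DecidablePred (AllowedV t) := fun q => by
  unfold AllowedV; infer_instance

/-- `MonT n d t` is equivalent to multisets of size `d` over the allowed variables. -/
noncomputable def monEquiv (d : ℕ) (t : TIdx n) :
    MonT n d t ≃ Sym {q : PIdx n // AllowedV t q} d where
  toFun x := ⟨x.val.toMultiset.attach.map
      (fun y => (⟨y.val, x.prop.1 y.val ((Finsupp.mem_toMultiset _ _).mp y.prop)⟩ :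
        {q : PIdx n // AllowedV t q})), by
    rw [Multiset.card_map, Multiset.card_attach, Finsupp.card_toMultiset]
    exact x.prop.2⟩
  invFun s := ⟨(s.val.map Subtype.val).toFinsupp, by
    constructor
    · intro q hq
      rw [Multiset.toFinsupp_support, Multiset.mem_toFinset, Multiset.mem_map] at hq
      obtain ⟨y, _, rfl⟩ := hq
      exact y.prop
    · show degF _ = d
      rw [degF]
      rw [show ((s.val.map Subtype.val).toFinsupp.sum fun _ e => e)
        = (s.val.map Subtype.val).toFinsupp.toMultiset.card from
          (Finsupp.card_toMultiset _).symm]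
      rw [Multiset.toFinsupp_toMultiset, Multiset.card_map]
      exact s.prop⟩
  left_inv x := by
    apply Subtype.ext
    show ((x.val.toMultiset.attach.map _).map Subtype.val).toFinsupp = x.val
    rw [Multiset.map_map]
    have : (x.val.toMultiset.attach.map fun y => y.val) = x.val.toMultiset :=
      Multiset.attach_map_val _
    show (x.val.toMultiset.attach.map fun y => y.val).toFinsupp = x.val
    rw [this]
    exact Finsupp.toMultiset_toFinsupp x.val
  right_inv s := by
    apply Subtype.ext
    apply Multiset.map_injective Subtype.val_injective
    rw [Multiset.map_map]
    show ((s.val.map Subtype.val).toFinsupp.toMultiset.attach.map fun y => y.val) = _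
    rw [Multiset.attach_map_val, Multiset.toFinsupp_toMultiset]

noncomputable instance (d : ℕ) (t : TIdx n) : Fintype (MonT n d t) :=
  Fintype.ofEquiv _ (monEquiv d t).symm

/-- the allowed set of a triple is a point plus an interval. -/
noncomputable def allowedEquiv (t : TIdx n) :
    {q : PIdx n // AllowedV t q} ≃ Option {l : Fin n // t.1.2.2 ≤ l ∧ l < t.1.2.1} where
  toFun x := if h : x.val = pairT t then none else some ⟨x.val.1.2, by
    rcases x.prop with h' | ⟨h1, h2⟩
    · exact absurd h' h
    · exact ⟨h2, h1 ▸ x.val.2⟩⟩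
  invFun o := o.elim ⟨pairT t, Or.inl rfl⟩
    (fun l => ⟨⟨(t.1.2.1, l.val), l.prop.2⟩, Or.inr ⟨rfl, l.prop.1⟩⟩)
  left_inv x := by
    dsimp only
    by_cases h : x.val = pairT t
    · rw [dif_pos h]
      exact Subtype.ext h.symm
    · rw [dif_neg h]
      apply Subtype.ext
      rcases x.prop with h' | ⟨h1, h2⟩
      · exact absurd h' h
      · apply Subtype.ext
        exact Prod.ext h1.symm rfl
  right_inv o := by
    rcases o with _ | l
    · dsimp only [Option.elim]
      rw [dif_pos rfl]
    · dsimp only [Option.elim]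
      rw [dif_neg (fun h => absurd (congrArg (fun y : PIdx n => y.val.1) h)
        (ne_of_lt t.2.2))]

lemma card_interval (a b : Fin n) : Fintype.card {l : Fin n // a ≤ l ∧ l < b}
    = b.val - a.val := by
  rw [Fintype.card_subtype]
  rw [show Finset.filter (fun l => a ≤ l ∧ l < b) Finset.univ = Finset.Ico a b by
    ext l; simp [Finset.mem_Ico]]
  exact Fin.card_Ico a b

lemma card_MonT (d : ℕ) (t : TIdx n) :
    Fintype.card (MonT n d t) = (d + (t.1.2.1.val - t.1.2.2.val)).choose d := by
  rw [Fintype.card_congr (monEquiv d t), Sym.card_sym_eq_choose,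
    Fintype.card_congr (allowedEquiv t), Fintype.card_option, card_interval]
  have hlt : t.1.2.2 < t.1.2.1 := t.2.1
  have : t.1.2.2.val < t.1.2.1.val := hlt
  congr 1
  omega

def e3 {n : ℕ} : TIdx n ≃ Σ (i : Fin n), Σ (j : Fin i.1), Fin j.1 where
  toFun t := ⟨t.1.1, ⟨t.1.2.1.1, t.2.2⟩, ⟨t.1.2.2.1, t.2.1⟩⟩
  invFun x := ⟨(x.1, ⟨x.2.1.1, x.2.1.isLt.trans x.1.isLt⟩,
      ⟨x.2.2.1, (x.2.2.isLt.trans x.2.1.isLt).trans x.1.isLt⟩), x.2.2.isLt, x.2.1.isLt⟩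
  left_inv _ := rfl
  right_inv _ := rfl

lemma sum_sum_range (f : ℕ → ℕ) (M : ℕ) :
    ∑ j ∈ Finset.range M, ∑ c ∈ Finset.range j, f c
      = ∑ c ∈ Finset.range M, (M - 1 - c) * f c := by
  induction M with
  | zero => simp
  | succ M ih =>
      rw [Finset.sum_range_succ, ih, Finset.sum_range_succ]
      have h1 : (M + 1 - 1 - M) * f M = 0 := by
        have h : M + 1 - 1 - M = 0 := by omega
        rw [h, zero_mul]
      rw [h1, add_zero, ← Finset.sum_add_distrib]
      refine Finset.sum_congr rfl fun c hc => ?_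
      have hcM : c < M := Finset.mem_range.mp hc
      have h2 : M + 1 - 1 - c = (M - 1 - c) + 1 := by omega
      rw [h2, Nat.succ_mul]

lemma main_id (d : ℕ) : ∀ N : ℕ,
    ∑ i ∈ Finset.range N, ∑ j ∈ Finset.range i, ∑ k ∈ Finset.range j,
        (d + (j - k)).choose d
      = ∑ c ∈ Finset.range N, (N - 1 - c).choose 2 * (d + c + 1).choose d := by
  have hrefl : ∀ j : ℕ, ∑ k ∈ Finset.range j, (d + (j - k)).choose d
      = ∑ c ∈ Finset.range j, (d + c + 1).choose d := by
    intro j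
    calc ∑ k ∈ Finset.range j, (d + (j - k)).choose d
        = ∑ k ∈ Finset.range j, (d + (j - 1 - k) + 1).choose d := by
          refine Finset.sum_congr rfl fun k hk => ?_
          have := Finset.mem_range.mp hk
          congr 1
          omega
      _ = ∑ c ∈ Finset.range j, (d + c + 1).choose d :=
          Finset.sum_range_reflect (fun c => (d + c + 1).choose d) j
  intro N
  induction N with
  | zero => simp
  | succ N ih =>
      rw [Finset.sum_range_succ, ih]
      have hnew : ∑ j ∈ Finset.range N, ∑ k ∈ Finset.range j, (d + (j - k)).choose d
          = ∑ c ∈ Finset.range N, (N - 1 - c) * (d + c + 1).choose d := by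
        rw [Finset.sum_congr rfl (fun j _ => hrefl j), sum_sum_range]
      rw [hnew, ← Finset.sum_add_distrib, Finset.sum_range_succ]
      have hlast : (N + 1 - 1 - N).choose 2 * (d + N + 1).choose d = 0 := by
        have h : N + 1 - 1 - N = 0 := by omega
        rw [h]
        simp [Nat.choose]
      rw [hlast, add_zero]
      refine Finset.sum_congr rfl fun c hc => ?_
      have hcN : c < N := Finset.mem_range.mp hc
      have h2 : N + 1 - 1 - c = (N - 1 - c) + 1 := by omega
      rw [h2, Nat.choose_succ_succ ((N - 1 - c)) 1, Nat.choose_one_right]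
      ring

lemma reindex_id (N d : ℕ) (hn : 1 ≤ N) :
    ∑ c ∈ Finset.range N, (N - 1 - c).choose 2 * (d + c + 1).choose d
      = ∑ s ∈ Finset.Icc 2 (N - 1), s.choose 2 * (N - s + d).choose (N - s) := by
  have h1 : ∑ s ∈ Finset.Icc 2 (N - 1), s.choose 2 * (N - s + d).choose (N - s)
      = ∑ s ∈ Finset.range N, s.choose 2 * (N - s + d).choose (N - s) := by
    apply Finset.sum_subset
    · intro s hs
      rw [Finset.mem_Icc] at hs
      rw [Finset.mem_range]
      omega
    · intro s hs hns
      rw [Finset.mem_range] at hs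
      rw [Finset.mem_Icc] at hns
      push_neg at hns
      have hs2 : s < 2 := by omega
      interval_cases s <;> simp [Nat.choose]
  rw [h1]
  refine Finset.sum_nbij' (fun c => N - 1 - c) (fun s => N - 1 - s) ?_ ?_ ?_ ?_ ?_
  · intro c hc
    rw [Finset.mem_range] at hc ⊢
    omega
  · intro s hs
    rw [Finset.mem_range] at hs ⊢
    omega
  · intro c hc
    rw [Finset.mem_range] at hc
    omega
  · intro s hs
    rw [Finset.mem_range] at hs
    omega
  · intro c hc
    rw [Finset.mem_range] at hc
    have e1 : N - (N - 1 - c) = c + 1 := by omega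
    rw [e1]
    congr 1
    have e2 : c + 1 + d = d + c + 1 := by omega
    rw [e2]
    have := Nat.choose_symm (n := d + c + 1) (k := d) (by omega)
    have e3 : d + c + 1 - d = c + 1 := by omega
    rw [e3] at this
    exact this.symm

lemma card_sigma_MonT (d : ℕ) (hn : 1 ≤ n) :
    Fintype.card (Σ t : TIdx n, MonT n d t)
      = ∑ s ∈ Finset.Icc 2 (n - 1), s.choose 2 * (n - s + d).choose (n - s) := by
  rw [Fintype.card_sigma]
  have h0 : ∑ t : TIdx n, Fintype.card (MonT n d t)
      = ∑ t : TIdx n, (d + (t.1.2.1.val - t.1.2.2.val)).choose d :=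
    Finset.sum_congr rfl fun t _ => card_MonT d t
  rw [h0]
  have h1 : ∑ t : TIdx n, (d + (t.1.2.1.val - t.1.2.2.val)).choose d
      = ∑ x : Σ (i : Fin n), Σ (j : Fin i.1), Fin j.1,
          (d + (x.2.1.val - x.2.2.val)).choose d := by
    apply Fintype.sum_equiv e3
    intro t
    rfl
  rw [h1]
  have h2 : ∑ x : Σ (i : Fin n), Σ (j : Fin i.1), Fin j.1,
        (d + (x.2.1.val - x.2.2.val)).choose d
      = ∑ i ∈ Finset.range n, ∑ j ∈ Finset.range i, ∑ k ∈ Finset.range j,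
          (d + (j - k)).choose d := by
    rw [← Finset.univ_sigma_univ, Finset.sum_sigma]
    have step1 : ∀ i : Fin n,
        (∑ s : (j : Fin i.1) × Fin j.1, (d + (s.fst.val - s.snd.val)).choose d)
          = ∑ j ∈ Finset.range i.1, ∑ k ∈ Finset.range j, (d + (j - k)).choose d := by
      intro i
      rw [← Finset.univ_sigma_univ, Finset.sum_sigma]
      have step2 : ∀ j : Fin i.1,
          (∑ k : Fin j.1, (d + (j.val - k.val)).choose d)
            = ∑ k ∈ Finset.range j.1, (d + (j.val - k)).choose d :=
        fun j => Fin.sum_univ_eq_sum_range (fun k => (d + (j.val - k)).choose d) j.1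
      rw [Finset.sum_congr rfl (fun j _ => step2 j)]
      exact Fin.sum_univ_eq_sum_range
        (fun j => ∑ k ∈ Finset.range j, (d + (j - k)).choose d) i.1
    rw [Finset.sum_congr rfl (fun i _ => step1 i)]
    exact Fin.sum_univ_eq_sum_range
      (fun i => ∑ j ∈ Finset.range i, ∑ k ∈ Finset.range j, (d + (j - k)).choose d) n
  rw [h2, main_id d n, reindex_id n d hn]

lemma rank_Bn'Deg (d : ℕ) (hn : 1 ≤ n) :
    Module.rank ℂ (Bn'Deg n d)
      = ((∑ s ∈ Finset.Icc 2 (n - 1), s.choose 2 * (n - s + d).choose (n - s) : ℕ) :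
          Cardinal) := by
  rw [Bn'Deg_eq_span (n := n) d, rank_span (wB_linearIndependent d),
    Cardinal.mk_range_eq _ (wB_linearIndependent d).injective, Cardinal.mk_fintype,
    card_sigma_MonT d hn]

end BnPart


/-- `Hilb(Kₙ,t) = C(n,4)/(1−t)` and `Hilb(𝔅ₙ',t) = ∑_{s=2}^{n-1} C(s,2)/(1−t)^{n-s+1}`:
for every `k ≥ 0`, `dim (Kₙ)_k = C(n,4)` and
`dim (𝔅ₙ')_k = ∑_{s=2}^{n-1} C(s,2)·C(n−s+k, n−s)`. -/
theorem hilbert_series_Kn_Bn' (n : ℕ) (hn : 4 ≤ n) :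
    (∀ k : ℕ, Module.rank ℂ (KnDeg n k) = ((n.choose 4 : ℕ) : Cardinal)) ∧
    (∀ k : ℕ, Module.rank ℂ (Bn'Deg n k) =
      ((∑ s ∈ Finset.Icc 2 (n - 1), s.choose 2 * (n - s + k).choose (n - s) : ℕ) :
        Cardinal)) := by
  constructor
  · intro k
    exact rank_KnDeg k n
  · intro k
    exact rank_Bn'Deg k (by omega)
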